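/- Let Γ be a graph on n vertices and let α, β be compositions of n such that β refines α (β is obtained by splitting some parts of α into consecutive pieces). Then the number of ordered colorings of Γ of type α is at most the number of ordered colorings of type β: ζ_α(Γ) ≤ ζ_β(Γ). -/

import Mathlib

/-- `lam` is an ordered coloring of `G`: no two distinct vertices of the same
color are joined by a walk all of whose internal vertices have strictly smaller
colors. -/
def IsOrderedColoring {V C : Type*} [LinearOrder C] (G : SimpleGraph V)
    (lam : V → C) : Prop :=
  ∀ u v : V, u ≠ v → lam u = lam v →
    ¬ ∃ p : G.Walk u v, ∀ w ∈ p.support, w = u ∨ w = v ∨ lam w < lam u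

/-- `ζ_α(Γ)`: the number of ordered colorings of `Γ` of type the composition `α`
(given as a list of part sizes, in increasing color order). -/
noncomputable def zetaL {V : Type*} [Fintype V] (G : SimpleGraph V)
    (α : List ℕ) : ℕ :=
  Nat.card {lam : V → Fin α.length // IsOrderedColoring G lam ∧
    ∀ j : Fin α.length, Nat.card {v : V // lam v = j} = α.get j}

/-- `β` refines `α`: `β` is obtained by splitting each part of `α` into
consecutive pieces. -/
def RefinesComp (β α : List ℕ) : Prop :=
  ∃ L : List (List ℕ), α = L.map List.sum ∧ β = L.flatten

/-- Index of the block of `l` containing position `j`. -/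
def blockIdx : List ℕ → ℕ → ℕ
  | [], _ => 0
  | a :: l, j => if j < a then 0 else blockIdx l (j - a) + 1

lemma sum_take_succ' (l : List ℕ) (k : ℕ) :
    (l.take (k+1)).sum = (l.take k).sum + l.getD k 0 := by
  rcases lt_or_ge k l.length with h | h
  · rw [List.take_succ, List.sum_append, List.getD_eq_getElem _ _ h]
    simp [List.getElem?_eq_getElem h]
  · rw [List.take_of_length_le h, List.take_of_length_le (by omega),
      List.getD_eq_default _ _ h]
    omega

lemma take_sum_le (l : List ℕ) (k : ℕ) : (l.take k).sum ≤ l.sum := by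
  conv_rhs => rw [← List.take_append_drop k l]
  rw [List.sum_append]; omega

lemma take_sum_mono (l : List ℕ) {a b : ℕ} (h : a ≤ b) :
    (l.take a).sum ≤ (l.take b).sum := by
  calc (l.take a).sum = ((l.take b).take a).sum := by rw [List.take_take, Nat.min_eq_left h]
    _ ≤ (l.take b).sum := take_sum_le _ _

lemma blockIdx_eq_iff (l : List ℕ) (j k : ℕ) (hj : j < l.sum) :
    blockIdx l j = k ↔ (l.take k).sum ≤ j ∧ j < (l.take (k+1)).sum := by
  induction l generalizing j k with
  | nil => simp at hj
  | cons a l ih =>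
    cases k with
    | zero =>
      simp only [blockIdx, List.take_zero, List.sum_nil, zero_add, List.take_succ_cons,
        List.take_zero, List.sum_cons, Nat.add_zero]
      by_cases h : j < a
      · simp [h]
      · simp [h]
    | succ k =>
      by_cases h : j < a
      · simp only [blockIdx, if_pos h]
        constructor
        · omega
        · rintro ⟨h1, _⟩
          rw [List.take_succ_cons, List.sum_cons] at h1
          omega
      · have hj' : j - a < l.sum := by
          rw [List.sum_cons] at hj; omega
        simp only [blockIdx, if_neg h, Nat.add_right_cancel_iff]
        rw [ih (j - a) k hj', List.take_succ_cons, List.take_succ_cons, List.sum_cons,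
          List.sum_cons]
        omega

lemma blockIdx_lt (l : List ℕ) (j : ℕ) (hj : j < l.sum) : blockIdx l j < l.length := by
  by_contra h
  push_neg at h
  have := ((blockIdx_eq_iff l j (blockIdx l j) hj).mp rfl).1
  rw [List.take_of_length_le h] at this
  omega

lemma off_add_lt (l : List ℕ) {i k : ℕ} (hi : i < l.length) (hk : k < l.getD i 0) :
    (l.take i).sum + k < l.sum := by
  have h1 : (l.take i).sum + k < (l.take (i+1)).sum := by rw [sum_take_succ']; omega
  have h2 := take_sum_le l (i+1)
  omega

lemma blockIdx_off_add (l : List ℕ) {i k : ℕ} (hi : i < l.length) (hk : k < l.getD i 0) :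
    blockIdx l ((l.take i).sum + k) = i := by
  rw [blockIdx_eq_iff l _ i (off_add_lt l hi hk)]
  refine ⟨by omega, ?_⟩
  rw [sum_take_succ']; omega

lemma card_blockIdx_fiber (l : List ℕ) (k : ℕ) :
    Nat.card {t : Fin l.sum // blockIdx l t.1 = k} = l.getD k 0 := by
  have hb : (l.take (k+1)).sum ≤ l.sum := take_sum_le _ _
  have hs := sum_take_succ' l k
  have e : {t : Fin l.sum // blockIdx l t.1 = k} ≃ Fin (l.getD k 0) :=
    { toFun := fun t => by
        refine ⟨t.1.1 - (l.take k).sum, ?_⟩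
        have := (blockIdx_eq_iff l t.1.1 k t.1.2).mp t.2
        omega
      invFun := fun m => by
        have hlt : (l.take k).sum + m.1 < l.sum := by omega
        refine ⟨⟨(l.take k).sum + m.1, hlt⟩, ?_⟩
        rw [blockIdx_eq_iff l _ k hlt]
        omega
      left_inv := by
        rintro ⟨⟨t, ht⟩, h⟩
        have := (blockIdx_eq_iff l t k ht).mp h
        simp only [Subtype.mk.injEq, Fin.mk.injEq]
        omega
      right_inv := by
        rintro ⟨m, hm⟩
        simp }
  rw [Nat.card_congr e, Nat.card_eq_fintype_card, Fintype.card_fin]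

lemma flatten_getElem? {α : Type*} (L : List (List α)) :
    ∀ (i k : ℕ) (hi : i < L.length) (hk : k < (L[i]'hi).length),
    L.flatten[((L.map List.length).take i).sum + k]? = some ((L[i]'hi)[k]'hk) := by
  induction L with
  | nil => intro i k hi; simp at hi
  | cons l L ih =>
    intro i k hi hk
    cases i with
    | zero =>
      simp only [List.map_cons, List.take_zero, List.sum_nil, Nat.zero_add, List.flatten_cons,
        List.getElem_cons_zero] at hk ⊢
      rw [List.getElem?_append_left hk, List.getElem?_eq_getElem hk]
    | succ i =>
      have hi' : i < L.length := by simpa using hi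
      simp only [List.getElem_cons_succ] at hk ⊢
      have h2 := ih i k hi' hk
      simp only [List.map_cons, List.take_succ_cons, List.sum_cons, List.flatten_cons]
      rw [Nat.add_assoc, List.getElem?_append_right (by omega), Nat.add_sub_cancel_left]
      exact h2

lemma ordered_walk_aux {V C : Type*} [LinearOrder C] {G : SimpleGraph V} {lam : V → C}
    (h : IsOrderedColoring G lam) :
    ∀ (n : ℕ) (u v : V) (p : G.Walk u v), p.length ≤ n → u ≠ v → lam u = lam v →
      (∀ x ∈ p.support, lam x ≤ lam u) → False := by
  classical
  intro n
  induction n with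
  | zero =>
    intro u v p hl hne _ _
    exact hne (SimpleGraph.Walk.eq_of_length_eq_zero (Nat.le_zero.mp hl))
  | succ n ih =>
    intro u v p hl hne heq hsup
    by_cases hall : ∀ x ∈ p.support, x = u ∨ x = v ∨ lam x < lam u
    · exact h u v hne heq ⟨p, hall⟩
    · push_neg at hall
      obtain ⟨w, hw, hwu, hwv, hwlt⟩ := hall
      have hwle : lam w ≤ lam u := hsup w hw
      have hweq : lam u = lam w := le_antisymm hwlt hwle
      have hspec := p.take_spec hw
      have hlen : (p.takeUntil w hw).length + (p.dropUntil w hw).length = p.length := by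
        rw [← SimpleGraph.Walk.length_append, hspec]
      have hdrop : (p.dropUntil w hw).length ≠ 0 := fun h0 =>
        hwv (SimpleGraph.Walk.eq_of_length_eq_zero h0)
      refine ih u w (p.takeUntil w hw) (by omega) (fun h' => hwu h'.symm) hweq ?_
      intro x hx
      exact hsup x (p.support_takeUntil_subset hw hx)

lemma construct {V : Type*} [Fintype V] (G : SimpleGraph V) (L : List (List ℕ))
    (lam : V → Fin (L.map List.sum).length)
    (h : IsOrderedColoring G lam ∧
      ∀ j : Fin (L.map List.sum).length,
        Nat.card {v : V // lam v = j} = (L.map List.sum).get j) :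
    ∃ mu : V → Fin L.flatten.length,
      (IsOrderedColoring G mu ∧
        ∀ j : Fin L.flatten.length, Nat.card {v : V // mu v = j} = L.flatten.get j) ∧
      ∀ v : V, (lam v : ℕ) = blockIdx (L.map List.length) (mu v) := by
  classical
  obtain ⟨hord, hcard⟩ := h
  set M := L.map List.length with hM
  have hMlen : M.length = L.length := List.length_map _
  have hslen : (L.map List.sum).length = L.length := List.length_map _
  have hflen : L.flatten.length = M.sum := by
    rw [hM, List.length_flatten]
  have hMget : ∀ (i : ℕ) (hi : i < L.length), M.getD i 0 = (L[i]'hi).length := by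
    intro i hi
    rw [List.getD_eq_getElem _ _ (by omega)]
    simp [hM, List.getElem_map]
  have hfib : ∀ i : Fin (L.map List.sum).length,
      Nonempty ({v : V // lam v = i} ≃ Fin ((L[(i : ℕ)]'(hslen ▸ i.2)).sum)) := by
    intro i
    refine ⟨Fintype.equivFinOfCardEq ?_⟩
    rw [← Nat.card_eq_fintype_card, hcard i]
    simp [List.get_eq_getElem, List.getElem_map]
  let e : ∀ i : Fin (L.map List.sum).length,
      {v : V // lam v = i} ≃ Fin ((L[(i : ℕ)]'(hslen ▸ i.2)).sum) :=
    fun i => (hfib i).some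
  let f : V → ℕ := fun v =>
    blockIdx (L[(lam v : ℕ)]'(hslen ▸ (lam v).2)) (e (lam v) ⟨v, rfl⟩ : Fin _)
  have hfe : ∀ (v : V) (i0 : Fin (L.map List.sum).length) (hv : lam v = i0),
      f v = blockIdx (L[(i0 : ℕ)]'(hslen ▸ i0.2)) (e i0 ⟨v, hv⟩ : Fin _) := by
    intro v i0 hv
    subst hv
    rfl
  have hf : ∀ v : V, f v < M.getD (lam v : ℕ) 0 := by
    intro v
    rw [hMget _ (hslen ▸ (lam v).2)]
    exact blockIdx_lt _ _ (e (lam v) ⟨v, rfl⟩ : Fin _).2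
  have hlamlt : ∀ v : V, (lam v : ℕ) < M.length := by
    intro v
    have := (lam v).2
    omega
  let muval : V → ℕ := fun v => (M.take (lam v : ℕ)).sum + f v
  have hmudef : ∀ v, muval v = (M.take (lam v : ℕ)).sum + f v := fun _ => rfl
  have hmuval : ∀ v : V, muval v < M.sum := fun v => off_add_lt M (hlamlt v) (hf v)
  let mu : V → Fin L.flatten.length := fun v => ⟨muval v, by rw [hflen]; exact hmuval v⟩
  have hmuv : ∀ v, (mu v : ℕ) = muval v := fun _ => rfl
  have hrec : ∀ v : V, blockIdx M (muval v) = (lam v : ℕ) :=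
    fun v => blockIdx_off_add M (hlamlt v) (hf v)
  have hmono : ∀ x u : V, muval x < muval u → (lam x : ℕ) ≤ (lam u : ℕ) := by
    intro x u hlt
    by_contra hgt
    push_neg at hgt
    have h1 : muval u < (M.take ((lam u : ℕ) + 1)).sum := by
      rw [sum_take_succ']
      have := hf u
      have := hmudef u
      omega
    have h2 : (M.take ((lam u : ℕ) + 1)).sum ≤ (M.take (lam x : ℕ)).sum :=
      take_sum_mono M hgt
    have h3 := hmudef x
    omega
  have hmuord : IsOrderedColoring G mu := by
    intro u v hne heq
    rintro ⟨p, hp⟩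
    have hvv : muval u = muval v := congrArg Fin.val heq
    have hlameq : lam u = lam v := by
      apply Fin.val_injective
      rw [← hrec u, ← hrec v, hvv]
    refine ordered_walk_aux hord p.length u v p le_rfl hne hlameq ?_
    intro x hx
    rcases hp x hx with h1 | h1 | h1
    · rw [h1]
    · rw [h1, hlameq]
    · rw [Fin.lt_def, hmuv, hmuv] at h1
      rw [Fin.le_def]
      exact hmono x u h1
  refine ⟨mu, ⟨hmuord, ?_⟩, fun v => (hrec v).symm⟩
  intro j
  have hjM : (j : ℕ) < M.sum := by rw [← hflen]; exact j.2
  set i := blockIdx M (j : ℕ) with hidef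
  have hiM : i < M.length := blockIdx_lt M _ hjM
  have hiL : i < L.length := by omega
  have hchar := (blockIdx_eq_iff M _ i hjM).mp rfl
  rw [sum_take_succ'] at hchar
  set a := (M.take i).sum with hadef
  set k := (j : ℕ) - a with hkdef
  have hkM : k < M.getD i 0 := by omega
  have hkL : k < (L[i]'hiL).length := by rw [← hMget i hiL]; exact hkM
  have hja : (j : ℕ) = a + k := by omega
  have hi2 : i < (L.map List.sum).length := by omega
  have hiff : ∀ v : V, mu v = j ↔ lam v = (⟨i, hi2⟩ : Fin (L.map List.sum).length) ∧ f v = k := by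
    intro v
    constructor
    · intro hv
      have hv' : muval v = (j : ℕ) := congrArg Fin.val hv
      have h1 : (lam v : ℕ) = i := by rw [← hrec v, hv']
      refine ⟨Fin.val_injective h1, ?_⟩
      have h3 : (M.take (lam v : ℕ)).sum = a := by rw [h1]
      have h4 := hmudef v
      omega
    · rintro ⟨h1, h2⟩
      apply Fin.val_injective
      rw [hmuv]
      have h1' : (lam v : ℕ) = i := congrArg Fin.val h1
      rw [hmudef v, h1', h2, ← hadef, ← hja]
  have hequivE : {s : {v : V // lam v = (⟨i, hi2⟩ : Fin (L.map List.sum).length)} // f s.1 = k}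
      ≃ {t : Fin ((L[i]'hiL).sum) // blockIdx (L[i]'hiL) t.1 = k} := by
    refine Equiv.subtypeEquiv (e ⟨i, hi2⟩) fun s => ?_
    exact iff_of_eq (congrArg (fun m => m = k) (hfe s.1 ⟨i, hi2⟩ s.2))
  have h5 := flatten_getElem? L i k hiL hkL
  rw [← hM] at h5
  have h6 : L.flatten[(j : ℕ)]? = some ((L[i]'hiL)[k]'hkL) := by rw [hja]; exact h5
  have h7 : L.flatten[(j : ℕ)]? = some (L.flatten.get j) := by
    rw [List.get_eq_getElem, List.getElem?_eq_getElem]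
  have h8 : L.flatten.get j = (L[i]'hiL)[k]'hkL := Option.some.inj (h7.symm.trans h6)
  calc Nat.card {v : V // mu v = j}
      = Nat.card {v : V // lam v = (⟨i, hi2⟩ : Fin (L.map List.sum).length) ∧ f v = k} :=
        Nat.card_congr (Equiv.subtypeEquivRight hiff)
    _ = Nat.card {s : {v : V // lam v = (⟨i, hi2⟩ : Fin (L.map List.sum).length)} // f s.1 = k} :=
        Nat.card_congr (Equiv.subtypeSubtypeEquivSubtypeInter _ _).symm
    _ = Nat.card {t : Fin ((L[i]'hiL).sum) // blockIdx (L[i]'hiL) t.1 = k} :=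
        Nat.card_congr hequivE
    _ = (L[i]'hiL).getD k 0 := card_blockIdx_fiber _ _
    _ = (L[i]'hiL)[k]'hkL := List.getD_eq_getElem _ _ hkL
    _ = L.flatten.get j := h8.symm

/-- If `β` refines `α` then `ζ_α(Γ) ≤ ζ_β(Γ)`. -/
theorem zeta_mono_refines {V : Type*} [Fintype V] (G : SimpleGraph V)
    (α β : List ℕ) (hα : ∀ x ∈ α, 0 < x) (hβ : ∀ x ∈ β, 0 < x)
    (hsum : α.sum = Fintype.card V) (href : RefinesComp β α) :
    zetaL G α ≤ zetaL G β := by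
  obtain ⟨L, hA, hB⟩ := href
  subst hA
  subst hB
  have key := fun x : {lam : V → Fin (L.map List.sum).length // IsOrderedColoring G lam ∧
      ∀ j : Fin (L.map List.sum).length,
        Nat.card {v : V // lam v = j} = (L.map List.sum).get j} =>
    construct G L x.1 x.2
  choose F hF1 hF2 using key
  unfold zetaL
  refine Nat.card_le_card_of_injective (fun x => ⟨F x, hF1 x⟩) ?_
  intro x y hxy
  have h' : F x = F y := congrArg Subtype.val hxy
  refine Subtype.ext (funext fun v => Fin.val_injective ?_)
  rw [hF2 x v, hF2 y v, h']
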